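/- Let U : S(ℝⁿ) → S(ℝⁿ) be a bijection satisfying, for all f, g ∈ S(ℝⁿ): (1) U(f + ḡ) = U(f) + conj(U(g)), (2) U(f·g) = U(f)·U(g), (3) U(f ∗ g) = U(f) ∗ U(g). If A : ℝⁿ → ℝⁿ is a bijection such that A(supp f) = supp Uf for every f ∈ S(ℝⁿ), then A is a homeomorphism of ℝⁿ onto itself. -/

import Mathlib

open MeasureTheory SchwartzMap Complex

section Stmt7AuxSection
open Polynomial Filter Real Set Metric SchwartzMap Nat
open scoped ContDiff
noncomputable section
namespace Stmt7Aux


lemma glue_rep (n : ℕ) : ∃ p : ℝ[X],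
    iteratedDeriv n expNegInvGlue = fun x => p.eval x⁻¹ * expNegInvGlue x := by
  induction n with
  | zero => exact ⟨1, by funext x; simp⟩
  | succ n ih =>
    obtain ⟨p, hp⟩ := ih
    refine ⟨X ^ 2 * (p - derivative (R := ℝ) p), ?_⟩
    funext x
    rw [iteratedDeriv_succ, hp]
    exact (expNegInvGlue.hasDerivAt_polynomial_eval_inv_mul p x).deriv

lemma poly_glue_bound (p : ℝ[X]) : ∃ C, ∀ x : ℝ, |p.eval x⁻¹ * expNegInvGlue x| ≤ C := by
  refine ⟨∑ i ∈ Finset.range (p.natDegree + 1), |p.coeff i| * (i ! : ℝ), fun x => ?_⟩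
  rcases le_or_gt x 0 with hx | hx
  · rw [expNegInvGlue.zero_of_nonpos hx, mul_zero, _root_.abs_zero]
    positivity
  · have hglue : expNegInvGlue x = Real.exp (-x⁻¹) := by
      rw [expNegInvGlue, if_neg (not_le.2 hx)]
    have hy0 : 0 < x⁻¹ := inv_pos.2 hx
    set y := x⁻¹ with hy
    rw [hglue, _root_.abs_mul, _root_.abs_of_pos (Real.exp_pos _)]
    have h1 : |p.eval y| ≤ ∑ i ∈ Finset.range (p.natDegree + 1), |p.coeff i| * y ^ i := by
      rw [p.eval_eq_sum_range]
      refine (Finset.abs_sum_le_sum_abs _ _).trans ?_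
      refine Finset.sum_le_sum fun i _ => ?_
      rw [_root_.abs_mul, _root_.abs_pow, _root_.abs_of_pos hy0]
    calc |p.eval y| * Real.exp (-y)
        ≤ (∑ i ∈ Finset.range (p.natDegree + 1), |p.coeff i| * y ^ i) * Real.exp (-y) :=
          mul_le_mul_of_nonneg_right h1 (Real.exp_pos _).le
      _ = ∑ i ∈ Finset.range (p.natDegree + 1), |p.coeff i| * (y ^ i * Real.exp (-y)) := by
          rw [Finset.sum_mul]; congr 1; funext i; ring
      _ ≤ ∑ i ∈ Finset.range (p.natDegree + 1), |p.coeff i| * (i ! : ℝ) := by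
          refine Finset.sum_le_sum fun i _ => ?_
          refine mul_le_mul_of_nonneg_left ?_ (_root_.abs_nonneg _)
          have h2 : y ^ i ≤ (i ! : ℝ) * Real.exp y := by
            have := Real.pow_div_factorial_le_exp y hy0.le i
            rw [div_le_iff₀ (by positivity : (0:ℝ) < (i ! : ℝ))] at this
            linarith
          rw [Real.exp_neg]
          calc y ^ i * (Real.exp y)⁻¹ ≤ ((i ! : ℝ) * Real.exp y) * (Real.exp y)⁻¹ :=
                mul_le_mul_of_nonneg_right h2 (by positivity)
            _ = (i ! : ℝ) := by field_simp

lemma glue_deriv_bound (n : ℕ) : ∃ C, 0 ≤ C ∧ ∀ x : ℝ, ‖iteratedDeriv n expNegInvGlue x‖ ≤ C := by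
  obtain ⟨p, hp⟩ := glue_rep n
  obtain ⟨C, hC⟩ := poly_glue_bound p
  exact ⟨C, le_trans (_root_.abs_nonneg _) (hC 0), fun x => by
    rw [hp, Real.norm_eq_abs]; exact hC x⟩

lemma shift_glue_bound (a : ℝ) (n : ℕ) : ∃ C, 0 ≤ C ∧
    ∀ t : ℝ, ‖iteratedFDeriv ℝ n (fun t => expNegInvGlue (t - a)) t‖ ≤ C := by
  obtain ⟨C, hC0, hC⟩ := glue_deriv_bound n
  refine ⟨C, hC0, fun t => ?_⟩
  rw [norm_iteratedFDeriv_eq_norm_iteratedDeriv]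
  have h : (fun t : ℝ => expNegInvGlue (t - a)) = fun t => expNegInvGlue (t + (-a)) := by
    funext t; rw [sub_eq_add_neg]
  rw [h, iteratedDeriv_comp_add_const]
  exact hC _

lemma expneg_iteratedDeriv (n : ℕ) :
    iteratedDeriv n (fun t : ℝ => Real.exp (-t)) = fun t => (-1 : ℝ) ^ n * Real.exp (-t) := by
  induction n with
  | zero => funext t; simp
  | succ n ih =>
    rw [iteratedDeriv_succ, ih]
    funext t
    have h : HasDerivAt (fun t : ℝ => (-1 : ℝ) ^ n * Real.exp (-t))
        ((-1 : ℝ) ^ (n + 1) * Real.exp (-t)) t := by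
      have h1 : HasDerivAt (fun t : ℝ => Real.exp (-t)) (-Real.exp (-t)) t := by
        simpa [Function.comp_def] using ((Real.hasDerivAt_exp (-t)).comp t ((hasDerivAt_id t).neg))
      have := h1.const_mul ((-1 : ℝ) ^ n)
      rw [show (-1 : ℝ) ^ (n + 1) * Real.exp (-t) = (-1 : ℝ) ^ n * -Real.exp (-t) by ring]
      exact this
    exact h.deriv

lemma expneg_contDiff : ContDiff ℝ ∞ (fun t : ℝ => Real.exp (-t)) :=
  Real.contDiff_exp.comp contDiff_neg

lemma expneg_norm_iteratedFDeriv (n : ℕ) (t : ℝ) :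
    ‖iteratedFDeriv ℝ n (fun t : ℝ => Real.exp (-t)) t‖ = Real.exp (-t) := by
  rw [norm_iteratedFDeriv_eq_norm_iteratedDeriv, expneg_iteratedDeriv]
  simp [_root_.abs_of_pos (Real.exp_pos _)]

lemma shiftglue_contDiff (a : ℝ) : ContDiff ℝ ∞ (fun t : ℝ => expNegInvGlue (t - a)) :=
  expNegInvGlue.contDiff.comp (contDiff_id.sub contDiff_const)

lemma iteratedFDeriv_eq_zero_of_eventuallyEq {𝔼 𝔽 : Type*} [NormedAddCommGroup 𝔼]
    [NormedSpace ℝ 𝔼] [NormedAddCommGroup 𝔽] [NormedSpace ℝ 𝔽]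
    {f : 𝔼 → 𝔽} {x : 𝔼} (h : f =ᶠ[nhds x] 0) (n : ℕ) : iteratedFDeriv ℝ n f x = 0 := by
  have h' : f =ᶠ[nhdsWithin x Set.univ] (fun _ => (0 : 𝔽)) := by
    rwa [nhdsWithin_univ]
  have heq := Filter.EventuallyEq.iteratedFDerivWithin_eq (𝕜 := ℝ) h' h.self_of_nhds n
  rw [iteratedFDerivWithin_univ, iteratedFDerivWithin_univ] at heq
  rw [heq, iteratedFDeriv_zero_fun]
  rfl

/-- The 1D profile function. -/
def psi (a : ℝ) : ℝ → ℝ := fun t => Real.exp (-t) * expNegInvGlue (t - a)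

lemma psi_contDiff (a : ℝ) : ContDiff ℝ ∞ (psi a) :=
  expneg_contDiff.mul (shiftglue_contDiff a)

lemma psi_eq_zero_iff {a t : ℝ} : psi a t = 0 ↔ t ≤ a := by
  unfold psi
  simp [_root_.mul_eq_zero, Real.exp_ne_zero, expNegInvGlue.zero_iff_nonpos, sub_nonpos]

lemma psi_decay (a : ℝ) (ha : 0 < a) (k n : ℕ) :
    ∃ C : ℝ, ∀ t, ‖t‖ ^ k * ‖iteratedFDeriv ℝ n (psi a) t‖ ≤ C := by
  choose M hM0 hM using fun i => shift_glue_bound a i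
  set B : ℝ := ∑ j ∈ Finset.range (n + 1), M j with hB
  have hB0 : 0 ≤ B := Finset.sum_nonneg fun j _ => hM0 j
  have hMB : ∀ i, i ≤ n → M i ≤ B := fun i hi =>
    Finset.single_le_sum (fun j _ => hM0 j) (Finset.mem_range.2 (Nat.lt_succ_of_le hi))
  refine ⟨(k ! : ℝ) * (2 ^ n * B), fun t => ?_⟩
  rcases lt_or_ge t 0 with ht | ht
  · have hev : psi a =ᶠ[nhds t] 0 := by
      filter_upwards [Iio_mem_nhds (lt_trans ht ha)] with s hs
      exact psi_eq_zero_iff.2 (le_of_lt hs)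
    rw [iteratedFDeriv_eq_zero_of_eventuallyEq hev n]
    simp only [norm_zero, mul_zero]
    positivity
  · have hprod := norm_iteratedFDeriv_mul_le (𝕜 := ℝ) (A := ℝ)
      expneg_contDiff (shiftglue_contDiff a) t (n := n) (mod_cast le_top)
    have hsum : ∑ i ∈ Finset.range (n + 1), (n.choose i : ℝ) *
        ‖iteratedFDeriv ℝ i (fun t : ℝ => Real.exp (-t)) t‖ *
        ‖iteratedFDeriv ℝ (n - i) (fun t => expNegInvGlue (t - a)) t‖ ≤
        Real.exp (-t) * (2 ^ n * B) := by
      calc ∑ i ∈ Finset.range (n + 1), (n.choose i : ℝ) *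
          ‖iteratedFDeriv ℝ i (fun t : ℝ => Real.exp (-t)) t‖ *
          ‖iteratedFDeriv ℝ (n - i) (fun t => expNegInvGlue (t - a)) t‖
          ≤ ∑ i ∈ Finset.range (n + 1), (n.choose i : ℝ) * Real.exp (-t) * B := by
            refine Finset.sum_le_sum fun i hi => ?_
            rw [expneg_norm_iteratedFDeriv]
            refine mul_le_mul_of_nonneg_left ?_ (by positivity)
            exact (hM _ t).trans (hMB _ (Nat.sub_le _ _))
        _ = Real.exp (-t) * (2 ^ n * B) := by
            rw [← Finset.sum_mul, ← Finset.sum_mul]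
            rw [← Nat.cast_sum, Nat.sum_range_choose]
            push_cast
            ring
    have hkey : ‖t‖ ^ k * ‖iteratedFDeriv ℝ n (psi a) t‖ ≤
        (t ^ k * Real.exp (-t)) * (2 ^ n * B) := by
      rw [Real.norm_eq_abs, _root_.abs_of_nonneg ht]
      calc t ^ k * ‖iteratedFDeriv ℝ n (psi a) t‖
          ≤ t ^ k * (Real.exp (-t) * (2 ^ n * B)) := by
            refine mul_le_mul_of_nonneg_left ((hprod.trans hsum)) (by positivity)
        _ = (t ^ k * Real.exp (-t)) * (2 ^ n * B) := by ring
    refine hkey.trans ?_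
    have hfac : t ^ k * Real.exp (-t) ≤ (k ! : ℝ) := by
      have h2 : t ^ k ≤ (k ! : ℝ) * Real.exp t := by
        have := Real.pow_div_factorial_le_exp t ht k
        rw [div_le_iff₀ (by positivity : (0:ℝ) < (k ! : ℝ))] at this
        linarith
      rw [Real.exp_neg]
      calc t ^ k * (Real.exp t)⁻¹ ≤ ((k ! : ℝ) * Real.exp t) * (Real.exp t)⁻¹ :=
            mul_le_mul_of_nonneg_right h2 (by positivity)
        _ = (k ! : ℝ) := by field_simp
    exact mul_le_mul_of_nonneg_right hfac (by positivity)

/-- The 1D profile as a Schwartz function. -/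
def psiS (a : ℝ) (ha : 0 < a) : SchwartzMap ℝ ℝ :=
  ⟨psi a, psi_contDiff a, psi_decay a ha⟩

lemma psiS_apply (a : ℝ) (ha : 0 < a) (t : ℝ) : psiS a ha t = psi a t := rfl



lemma psiS_apply' (a : ℝ) (ha : 0 < a) (t : ℝ) : (psiS a ha t = 0 ↔ t ≤ a) := by
  rw [show psiS a ha t = psi a t from rfl]
  exact psi_eq_zero_iff

variable {E : Type*} [NormedAddCommGroup E] [InnerProductSpace ℝ E]

/-- `M = 2 • innerSL` as a CLM. -/
def MM : E →L[ℝ] E →L[ℝ] ℝ := innerSL ℝ + innerSL ℝ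

lemma hasTemperateGrowth_affine (c : E) :
    Function.HasTemperateGrowth (fun x : E => (MM (x - c) : E →L[ℝ] ℝ)) := by
  have hder : fderiv ℝ (fun x : E => MM (x - c)) = fun _ => (MM : E →L[ℝ] E →L[ℝ] ℝ) := by
    funext x
    have h1 : HasFDerivAt (fun x : E => MM (x - c)) ((MM).comp (ContinuousLinearMap.id ℝ E)) x :=
      (MM.hasFDerivAt).comp x ((hasFDerivAt_id x).sub_const c)
    simpa [ContinuousLinearMap.comp_id] using h1.fderiv
  refine Function.HasTemperateGrowth.of_fderiv (k := 1) (C := ‖(MM : E →L[ℝ] E →L[ℝ] ℝ)‖ * (1 + ‖c‖)) ?_ ?_ ?_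
  · rw [hder]; exact Function.HasTemperateGrowth.const _
  · exact MM.differentiable.comp (differentiable_id.sub_const c)
  · intro x
    have h1 : ‖MM (x - c)‖ ≤ ‖(MM : E →L[ℝ] E →L[ℝ] ℝ)‖ * ‖x - c‖ := MM.le_opNorm _
    have h2 : ‖x - c‖ ≤ ‖x‖ + ‖c‖ := norm_sub_le _ _
    have h3 : (0:ℝ) ≤ ‖(MM : E →L[ℝ] E →L[ℝ] ℝ)‖ := ContinuousLinearMap.opNorm_nonneg _
    have h4 : (0:ℝ) ≤ ‖x‖ := norm_nonneg _
    have h5 : (0:ℝ) ≤ ‖c‖ := norm_nonneg _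
    calc ‖MM (x - c)‖ ≤ ‖(MM : E →L[ℝ] E →L[ℝ] ℝ)‖ * (‖x‖ + ‖c‖) := by
          refine h1.trans (mul_le_mul_of_nonneg_left h2 h3)
      _ ≤ ‖(MM : E →L[ℝ] E →L[ℝ] ℝ)‖ * (1 + ‖c‖) * (1 + ‖x‖) ^ 1 := by
          rw [pow_one]; nlinarith [mul_nonneg h3 (mul_nonneg h5 h4)]

lemma q_hasFDerivAt (c : E) (x : E) :
    HasFDerivAt (fun y : E => ‖y - c‖ ^ 2) (MM (x - c)) x := by
  have hf : HasFDerivAt (fun y : E => y - c) (ContinuousLinearMap.id ℝ E) x :=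
    (hasFDerivAt_id x).sub_const c
  have := hf.norm_sq
  convert this using 1
  ext v
  simp [MM, two_smul, ContinuousLinearMap.comp_id]
  rfl

lemma hasTemperateGrowth_q (c : E) :
    Function.HasTemperateGrowth (fun x : E => ‖x - c‖ ^ 2) := by
  refine Function.HasTemperateGrowth.of_fderiv (k := 2) (C := (1 + ‖c‖) ^ 2) ?_ ?_ ?_
  · have hder : fderiv ℝ (fun x : E => ‖x - c‖ ^ 2) = fun x => MM (x - c) := by
      funext x; exact (q_hasFDerivAt c x).fderiv
    rw [hder]; exact hasTemperateGrowth_affine c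
  · exact fun x => (q_hasFDerivAt c x).differentiableAt
  · intro x
    have h2 : ‖x - c‖ ≤ ‖x‖ + ‖c‖ := norm_sub_le _ _
    have h4 : (0:ℝ) ≤ ‖x‖ := norm_nonneg _
    have h5 : (0:ℝ) ≤ ‖c‖ := norm_nonneg _
    have h6 : (0:ℝ) ≤ ‖x - c‖ := norm_nonneg _
    rw [Real.norm_eq_abs, _root_.abs_of_nonneg (by positivity)]
    have h7 : ‖x - c‖ ≤ (1 + ‖c‖) * (1 + ‖x‖) := by nlinarith
    calc ‖x - c‖ ^ 2 ≤ ((1 + ‖c‖) * (1 + ‖x‖)) ^ 2 := by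
          exact pow_le_pow_left₀ h6 h7 2
      _ = (1 + ‖c‖) ^ 2 * (1 + ‖x‖) ^ 2 := by ring

lemma q_upper (c : E) : ∃ (k : ℕ) (C : ℝ), ∀ x : E, ‖x‖ ≤ C * (1 + ‖(fun x : E => ‖x - c‖ ^ 2) x‖) ^ k := by
  refine ⟨1, 1 + ‖c‖, fun x => ?_⟩
  have h2 : ‖x‖ - ‖c‖ ≤ ‖x - c‖ := norm_sub_norm_le x c
  have h6 : (0:ℝ) ≤ ‖x - c‖ := norm_nonneg _
  have h5 : (0:ℝ) ≤ ‖c‖ := norm_nonneg _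
  show ‖x‖ ≤ (1 + ‖c‖) * (1 + ‖(‖x - c‖ ^ 2 : ℝ)‖) ^ 1
  rw [Real.norm_eq_abs, _root_.abs_of_nonneg (by positivity), pow_one]
  nlinarith [sq_nonneg (‖x - c‖ - 1), sq_nonneg ‖x - c‖]

/-- Real Schwartz function supported exactly outside the ball. -/
def ballComplR (c : E) {r : ℝ} (hr : 0 < r) : SchwartzMap E ℝ :=
  SchwartzMap.compCLM ℝ (hasTemperateGrowth_q c) (q_upper c) (psiS (r ^ 2) (by positivity))

lemma ballComplR_eq_zero_iff (c : E) {r : ℝ} (hr : 0 < r) (x : E) :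
    ballComplR c hr x = 0 ↔ ‖x - c‖ ≤ r := by
  have : ballComplR c hr x = psiS (r ^ 2) (by positivity) (‖x - c‖ ^ 2) := rfl
  rw [this, psiS_apply']
  constructor
  · intro h
    by_contra hgt
    push_neg at hgt
    nlinarith [norm_nonneg (x - c)]
  · intro h
    nlinarith [norm_nonneg (x - c)]

/-- Complex-valued version. -/
def ballComplC (c : E) {r : ℝ} (hr : 0 < r) : SchwartzMap E ℂ :=
  SchwartzMap.bilinLeftCLM (ContinuousLinearMap.lsmul ℝ ℝ : ℝ →L[ℝ] ℂ →L[ℝ] ℂ)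
    (Function.HasTemperateGrowth.const (1 : ℂ)) (ballComplR c hr)

lemma ballComplC_apply (c : E) {r : ℝ} (hr : 0 < r) (x : E) :
    ballComplC c hr x = (ballComplR c hr x : ℝ) • (1 : ℂ) := rfl

lemma tsupport_ballComplC (c : E) {r : ℝ} (hr : 0 < r) :
    tsupport ⇑(ballComplC c hr) = (Metric.ball c r)ᶜ := by
  have hsupp : Function.support ⇑(ballComplC c hr) = (Metric.closedBall c r)ᶜ := by
    ext x
    simp only [Function.mem_support, mem_compl_iff, Metric.mem_closedBall]
    rw [ballComplC_apply, dist_eq_norm]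
    rw [← ballComplR_eq_zero_iff c hr x]
    simp [smul_eq_mul]
  rw [tsupport, hsupp, closure_compl, interior_closedBall c hr.ne']


lemma exists_schwartz_tsupport_compl_ball {E : Type*} [NormedAddCommGroup E]
    [InnerProductSpace ℝ E] (c : E) {r : ℝ} (hr : 0 < r) :
    ∃ f : SchwartzMap E ℂ, tsupport ⇑f = (Metric.ball c r)ᶜ :=
  ⟨ballComplC c hr, tsupport_ballComplC c hr⟩

end Stmt7Aux
end
end Stmt7AuxSection


theorem stmt_7 (n : ℕ)
    (U : SchwartzMap (EuclideanSpace ℝ (Fin n)) ℂ → SchwartzMap (EuclideanSpace ℝ (Fin n)) ℂ)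
    (hUbij : Function.Bijective U)
    (h1 : ∀ f g h : SchwartzMap (EuclideanSpace ℝ (Fin n)) ℂ,
      (∀ x, h x = f x + starRingEnd ℂ (g x)) →
      ∀ x, U h x = U f x + starRingEnd ℂ (U g x))
    (h2 : ∀ f g h : SchwartzMap (EuclideanSpace ℝ (Fin n)) ℂ,
      (∀ x, h x = f x * g x) → ∀ x, U h x = U f x * U g x)
    (h3 : ∀ f g h : SchwartzMap (EuclideanSpace ℝ (Fin n)) ℂ,
      (∀ x, h x = ∫ y, f (x - y) * g y) →
      ∀ x, U h x = ∫ y, U f (x - y) * U g y)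
    (A : EuclideanSpace ℝ (Fin n) → EuclideanSpace ℝ (Fin n))
    (hAbij : Function.Bijective A)
    (hA : ∀ f : SchwartzMap (EuclideanSpace ℝ (Fin n)) ℂ,
      A '' tsupport ⇑f = tsupport ⇑(U f)) :
    ∃ e : EuclideanSpace ℝ (Fin n) ≃ₜ EuclideanSpace ℝ (Fin n), ⇑e = A := by
  have key1 : ∀ (c : EuclideanSpace ℝ (Fin n)) (r : ℝ), 0 < r → IsClosed (A ⁻¹' (Metric.ball c r)ᶜ) := by
    intro c r hr
    obtain ⟨g, hg⟩ := Stmt7Aux.exists_schwartz_tsupport_compl_ball c hr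
    obtain ⟨f, rfl⟩ := hUbij.surjective g
    have h := hA f
    rw [hg] at h
    rw [← h, Set.preimage_image_eq _ hAbij.injective]
    exact isClosed_tsupport _
  have key2 : ∀ (c : EuclideanSpace ℝ (Fin n)) (r : ℝ), 0 < r → IsClosed (A '' (Metric.ball c r)ᶜ) := by
    intro c r hr
    obtain ⟨g, hg⟩ := Stmt7Aux.exists_schwartz_tsupport_compl_ball c hr
    rw [← hg, hA g]
    exact isClosed_tsupport _
  have contA : Continuous A := by
    rw [continuous_iff_isClosed]
    intro K hK
    refine isClosed_of_closure_subset fun z hz => ?_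
    by_contra hzK
    obtain ⟨r, hr, hball⟩ := Metric.isOpen_iff.1 hK.isOpen_compl (A z) hzK
    have hsub : A ⁻¹' K ⊆ A ⁻¹' (Metric.ball (A z) r)ᶜ := fun w hw hmem => hball hmem hw
    have hz' : z ∈ A ⁻¹' (Metric.ball (A z) r)ᶜ :=
      (key1 _ _ hr).closure_subset ((closure_mono hsub) hz)
    exact hz' (Metric.mem_ball_self hr)
  have closedMap : ∀ C : Set (EuclideanSpace ℝ (Fin n)), IsClosed C → IsClosed (A '' C) := by
    intro C hC
    refine isClosed_of_closure_subset fun z hz => ?_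
    obtain ⟨w, rfl⟩ := hAbij.surjective z
    by_contra hzn
    have hwC : w ∉ C := fun h => hzn ⟨w, h, rfl⟩
    obtain ⟨r, hr, hball⟩ := Metric.isOpen_iff.1 hC.isOpen_compl w hwC
    have hsub : A '' C ⊆ A '' (Metric.ball w r)ᶜ :=
      Set.image_mono fun y hy hmem => hball hmem hy
    have hmem : A w ∈ A '' (Metric.ball w r)ᶜ :=
      (key2 _ _ hr).closure_subset (closure_mono hsub hz)
    obtain ⟨w', hw', hww⟩ := hmem
    rw [hAbij.injective hww] at hw'
    exact hw' (Metric.mem_ball_self hr)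
  have openA : IsOpenMap A := by
    intro V hV
    have h := closedMap Vᶜ hV.isClosed_compl
    rw [Set.image_compl_eq hAbij] at h
    simpa using h.isOpen_compl
  exact ⟨Equiv.toHomeomorphOfContinuousOpen (Equiv.ofBijective A hAbij) contA openA, rfl⟩
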